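/- Fix constants κ>0 and β∈(0,1), and let α* be the unique solution in (0,β) of h_κ(α)=0. Then g_κ is strictly decreasing on (0,α*] and strictly increasing on [α*,β); consequently the minimum of g_κ over (0,β) is attained uniquely at α*, and the minimum value equals g_κ(α*) = β/(α*)^κ. -/

import Mathlib

open Set Filter

open Set Filter intervalIntegral MeasureTheory

lemma aux_contOn (r : ℝ) : ContinuousOn (fun t : ℝ => t ^ r) (Ioi 0) := fun x hx =>
  (Real.continuousAt_rpow_const x r (Or.inl (ne_of_gt hx))).continuousWithinAt

lemma aux_intble {r a : ℝ} (ha : 0 < a) :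
    IntervalIntegrable (fun t : ℝ => t ^ r) volume a 1 := by
  apply ContinuousOn.intervalIntegrable
  apply (aux_contOn r).mono
  intro t ht
  exact lt_of_lt_of_le (lt_min ha one_pos) ht.1

lemma aux_closed {r a : ℝ} (ha : 0 < a) (hr : r ≠ -1) :
    ∫ t in a..(1:ℝ), t ^ r = (1 - a ^ (r+1))/(r+1) := by
  rw [integral_rpow (Or.inr ⟨hr, fun h0 => absurd h0.1 (by simp [lt_min ha one_pos, not_le.2 (lt_min ha one_pos)])⟩), Real.one_rpow]

lemma aux_deriv {r a : ℝ} (ha : 0 < a) :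
    HasDerivAt (fun u => ∫ t in u..(1:ℝ), t ^ r) (-(a ^ r)) a := by
  exact intervalIntegral.integral_hasDerivAt_left (aux_intble ha)
    ((aux_contOn r).stronglyMeasurableAtFilter isOpen_Ioi a ha)
    ((Real.continuousAt_rpow_const a r (Or.inl (ne_of_gt ha))))

lemma aux_id {κ a : ℝ} (hκ : 0 < κ) (ha : 0 < a) :
    a ^ κ * ∫ t in a..(1:ℝ), t ^ (-κ) = a * ∫ t in a..(1:ℝ), t ^ (κ - 2) := by
  rcases eq_or_ne κ 1 with hk | hk
  · subst hk
    norm_num [Real.rpow_one]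
  · have h1 : -κ ≠ -1 := fun hc => hk (by linarith [neg_injective hc])
    have h2 : κ - 2 ≠ -1 := fun hc => hk (by linarith)
    rw [aux_closed ha h1, aux_closed ha h2]
    have e1 : a ^ κ * a ^ (-κ + 1) = a := by
      rw [← Real.rpow_add ha, show κ + (-κ+1) = 1 by ring, Real.rpow_one]
    have e2 : a * a ^ (κ - 2 + 1) = a ^ κ := by
      rw [show a * a ^ (κ-2+1) = a^(1:ℝ) * a^(κ-2+1) by rw [Real.rpow_one],
        ← Real.rpow_add ha, show (1:ℝ) + (κ-2+1) = κ by ring]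
    have hκ1 : -κ + 1 ≠ 0 := fun hc => hk (by linarith)
    have hκ2 : κ - 2 + 1 ≠ 0 := fun hc => hk (by linarith)
    field_simp
    linear_combination (1 - κ) * e1 + (1 - κ) * e2


/-- For κ > 0 and β ∈ (0,1), with
`h α = β/α − ∫_α^1 t^(κ−2) dt − 1` and `g α = (∫_α^1 t^(−κ) dt)·β/(β−α)`,
if `α*` is the unique solution of `h α = 0` in `(0,β)`, then `g` is strictly
decreasing on `(0,α*]` and strictly increasing on `[α*,β)`, the minimum of `g`
over `(0,β)` is attained uniquely at `α*`, and `g α* = β/(α*)^κ`. -/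
theorem stmt2 (κ β : ℝ) (hκ : 0 < κ) (hβ : β ∈ Set.Ioo (0:ℝ) 1)
    (h g : ℝ → ℝ)
    (hh : ∀ α, h α = β / α - (∫ t in α..(1:ℝ), t ^ (κ - 2)) - 1)
    (hg : ∀ α, g α = (∫ t in α..(1:ℝ), t ^ (-κ)) * β / (β - α))
    (αs : ℝ) (hαs : αs ∈ Set.Ioo (0:ℝ) β) (hz : h αs = 0)
    (huniq : ∀ α ∈ Set.Ioo (0:ℝ) β, h α = 0 → α = αs) :
    StrictAntiOn g (Set.Ioc (0:ℝ) αs) ∧ StrictMonoOn g (Set.Ico αs β) ∧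
    (∀ α ∈ Set.Ioo (0:ℝ) β, α ≠ αs → g αs < g α) ∧
    g αs = β / αs ^ κ := by
  obtain ⟨hβ0, hβ1⟩ := hβ
  obtain ⟨hαs0, hαsβ⟩ := hαs
  -- derivative of h
  have hder : ∀ a : ℝ, 0 < a → HasDerivAt h ((a ^ κ - β) / a ^ 2) a := by
    intro a ha
    have hfun : h = fun α => β / α - (∫ t in α..(1:ℝ), t ^ (κ - 2)) - 1 := funext hh
    rw [hfun]
    have d1 : HasDerivAt (fun α : ℝ => β / α) (β * (-(a^2)⁻¹)) a := by
      simpa [div_eq_mul_inv] using (hasDerivAt_inv ha.ne').const_mul β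
    have d := (d1.sub (aux_deriv (r := κ - 2) ha)).sub_const 1
    refine HasDerivAt.congr_deriv d ?_
    symm
    have h2 : a ^ (κ-2) = a ^ κ / a ^ (2:ℕ) := by
      rw [Real.rpow_sub ha, ← Real.rpow_natCast a 2]; norm_num
    rw [h2]
    have ha2 : (a:ℝ)^(2:ℕ) ≠ 0 := pow_ne_zero 2 ha.ne'
    field_simp
    ring
  -- derivative of g
  have gder : ∀ a ∈ Ioo (0:ℝ) β, HasDerivAt g (-(β * a^(1-κ) * h a) / (β - a)^2) a := by
    rintro a ⟨ha, hab⟩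
    have hfun : g = fun α => (∫ t in α..(1:ℝ), t ^ (-κ)) * β / (β - α) := funext hg
    have hden : β - a ≠ 0 := sub_ne_zero.2 (ne_of_gt hab)
    have d1 : HasDerivAt (fun α => (∫ t in α..(1:ℝ), t^(-κ)) * β) (-(a^(-κ)) * β) a :=
      (aux_deriv ha).mul_const β
    have d2 : HasDerivAt (fun α : ℝ => β - α) (-1) a := by
      simpa using (hasDerivAt_id a).const_sub β
    have d := d1.div d2 hden
    rw [hfun]
    refine HasDerivAt.congr_deriv d ?_
    symm
    set F := ∫ t in a..(1:ℝ), t ^ (-κ) with hF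
    set J := ∫ t in a..(1:ℝ), t ^ (κ-2) with hJ
    have e1 : a ^ κ * F = a * J := aux_id hκ ha
    have e2 : h a = β / a - J - 1 := hh a
    have hA : (0:ℝ) < a ^ κ := Real.rpow_pos_of_pos ha κ
    have hneg : a ^ (-κ) = (a^κ)⁻¹ := Real.rpow_neg ha.le κ
    have h1κ : a ^ (1-κ) = a / a^κ := by rw [Real.rpow_sub ha, Real.rpow_one]
    rw [hneg, h1κ, e2]
    field_simp
    linear_combination (-1) * e1
  -- sign of h
  have hsign : (∀ a ∈ Ioo (0:ℝ) αs, 0 < h a) ∧ (∀ a ∈ Ioo αs β, h a < 0) := by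
    rcases le_or_gt 1 κ with hκ1 | hκ1
    · have hanti : StrictAntiOn h (Ioo 0 β) := by
        apply strictAntiOn_of_deriv_neg (convex_Ioo 0 β)
          (fun x hx => ((hder x hx.1).continuousAt).continuousWithinAt)
        intro x hx
        rw [interior_Ioo] at hx
        rw [(hder x hx.1).deriv]
        apply div_neg_of_neg_of_pos _ (pow_pos hx.1 2)
        have hx1 : x ^ κ ≤ x := by
          calc x ^ κ ≤ x ^ (1:ℝ) :=
            Real.rpow_le_rpow_of_exponent_ge hx.1 (le_of_lt (hx.2.trans hβ1)) hκ1
          _ = x := Real.rpow_one x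
        linarith [hx.2]
      constructor
      · intro a ha
        have := hanti ⟨ha.1, ha.2.trans hαsβ⟩ ⟨hαs0, hαsβ⟩ ha.2
        rw [hz] at this; exact this
      · intro a ha
        have := hanti ⟨hαs0, hαsβ⟩ ⟨hαs0.trans ha.1, ha.2⟩ ha.1
        rw [hz] at this; exact this
    · set m := β ^ (1/κ) with hm
      have hk1 : κ ≠ 1 := ne_of_lt hκ1
      have hm0 : 0 < m := Real.rpow_pos_of_pos hβ0 _
      have hmβ : m < β := by
        have h11 : (1:ℝ) < 1/κ := by rw [lt_div_iff₀ hκ]; linarith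
        calc m = β ^ (1/κ) := hm
          _ < β ^ (1:ℝ) := Real.rpow_lt_rpow_of_exponent_gt hβ0 hβ1 h11
          _ = β := Real.rpow_one β
      have hm1 : m < 1 := hmβ.trans hβ1
      have hmκ : m ^ κ = β := by
        rw [hm, ← Real.rpow_mul hβ0.le, one_div, inv_mul_cancel₀ hκ.ne', Real.rpow_one]
      have hκm2 : κ - 2 ≠ -1 := fun hc => hk1 (by linarith)
      -- h m < 0
      have hhm : h m < 0 := by
        have hcf := aux_closed (r := κ-2) hm0 hκm2
        have hβm : β / m = m ^ (κ-1) := by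
          rw [← hmκ, Real.rpow_sub hm0, Real.rpow_one]
        have hy : 1 < m ^ (κ-1) := by
          rw [Real.one_lt_rpow_iff_of_pos hm0]
          exact Or.inr ⟨hm1, by linarith⟩
        rw [hh, hcf, show κ - 2 + 1 = κ - 1 by ring, hβm]
        set y := m ^ (κ-1)
        have hrw : y - (1-y)/(κ-1) - 1 = (y-1)*κ/(κ-1) := by
          have : κ - 1 ≠ 0 := fun hc => hk1 (by linarith)
          field_simp
          ring
        rw [hrw]
        exact div_neg_of_pos_of_neg (mul_pos (by linarith) hκ) (by linarith)
      -- monotone pieces of h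
      have hanti : StrictAntiOn h (Ioc 0 m) := by
        apply strictAntiOn_of_deriv_neg (convex_Ioc 0 m)
          (fun x hx => ((hder x hx.1).continuousAt).continuousWithinAt)
        intro x hx
        rw [interior_Ioc] at hx
        rw [(hder x hx.1).deriv]
        apply div_neg_of_neg_of_pos _ (pow_pos hx.1 2)
        have : x ^ κ < m ^ κ := Real.rpow_lt_rpow hx.1.le hx.2 hκ
        rw [hmκ] at this; linarith
      -- a point with positive h
      have hκ1' : (0:ℝ) < 1 - κ := by linarith
      set P := β * (1-κ)/2 with hPdef
      have hP0 : 0 < P := by positivity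
      have hPβ : P < β := by nlinarith
      set a1 := P ^ (1/κ) with ha1def
      have ha10 : 0 < a1 := Real.rpow_pos_of_pos hP0 _
      have ha1m : a1 < m := Real.rpow_lt_rpow hP0.le hPβ (by positivity)
      have ha1κ : a1 ^ κ = P := by
        rw [ha1def, ← Real.rpow_mul hP0.le, one_div, inv_mul_cancel₀ hκ.ne', Real.rpow_one]
      have hha1 : 0 < h a1 := by
        have hcf := aux_closed (r := κ-2) ha10 hκm2
        rw [hh, hcf, show κ - 2 + 1 = κ - 1 by ring]
        have hkey : a1 ^ (κ-1) = a1^κ / a1 := by rw [Real.rpow_sub ha10, Real.rpow_one]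
        rw [hkey]
        have hexpand : β/a1 - (1 - a1^κ/a1)/(κ-1) - 1
            = (β*(1-κ) - a1^κ + a1*κ)/(a1*(1-κ)) := by
          have h1 : κ - 1 ≠ 0 := fun hc => hk1 (by linarith)
          field_simp
          ring
        rw [hexpand]
        apply div_pos _ (by positivity)
        rw [ha1κ]
        nlinarith
      -- αs < m
      have hαsm : αs < m := by
        have hcon : ContinuousOn h (Icc a1 m) := fun x hx =>
          ((hder x (lt_of_lt_of_le ha10 hx.1)).continuousAt).continuousWithinAt
        obtain ⟨c, hc, hc0⟩ := intermediate_value_Icc' ha1m.le hcon ⟨hhm.le, hha1.le⟩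
        have hcβ : c ∈ Ioo (0:ℝ) β := ⟨lt_of_lt_of_le ha10 hc.1, lt_of_le_of_lt hc.2 hmβ⟩
        have hce := huniq c hcβ hc0
        have hle : αs ≤ m := hce ▸ hc.2
        rcases lt_or_eq_of_le hle with h' | h'
        · exact h'
        · rw [← h'] at hhm
          rw [hz] at hhm
          exact absurd hhm (lt_irrefl 0)
      constructor
      · intro a ha
        have := hanti ⟨ha.1, (ha.2.trans hαsm).le⟩ ⟨hαs0, hαsm.le⟩ ha.2
        rw [hz] at this; exact this
      · intro a ha
        rcases le_or_gt a m with ham | ham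
        · have := hanti ⟨hαs0, hαsm.le⟩ ⟨hαs0.trans ha.1, ham⟩ ha.1
          rw [hz] at this; exact this
        · by_contra hcon'
          push_neg at hcon'
          have hcnt : ContinuousOn h (Icc m a) := fun x hx =>
            ((hder x (hm0.trans_le hx.1)).continuousAt).continuousWithinAt
          obtain ⟨c, hc, hc0⟩ := intermediate_value_Icc ham.le hcnt ⟨hhm.le, hcon'⟩
          have hcβ : c ∈ Ioo (0:ℝ) β := ⟨hm0.trans_le hc.1, lt_of_le_of_lt hc.2 ha.2⟩
          have hce := huniq c hcβ hc0
          rw [hce] at hc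
          exact absurd hc.1 (not_le.2 hαsm)
  obtain ⟨hpos, hneg⟩ := hsign
  -- g strictly decreasing on Ioc 0 αs
  have gA : StrictAntiOn g (Ioc 0 αs) := by
    apply strictAntiOn_of_deriv_neg (convex_Ioc 0 αs)
      (fun x hx => (gder x ⟨hx.1, lt_of_le_of_lt hx.2 hαsβ⟩).continuousAt.continuousWithinAt)
    intro x hx
    rw [interior_Ioc] at hx
    have hxβ : x ∈ Ioo (0:ℝ) β := ⟨hx.1, hx.2.trans hαsβ⟩
    rw [(gder x hxβ).deriv]
    apply div_neg_of_neg_of_pos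
    · have h1 := hpos x hx
      have h2 : (0:ℝ) < x ^ (1-κ) := Real.rpow_pos_of_pos hx.1 _
      have := mul_pos (mul_pos hβ0 h2) h1
      linarith
    · have : (0:ℝ) < β - x := by linarith [hxβ.2]
      positivity
  -- g strictly increasing on Ico αs β
  have gM : StrictMonoOn g (Ico αs β) := by
    apply strictMonoOn_of_deriv_pos (convex_Ico αs β)
      (fun x hx => (gder x ⟨hαs0.trans_le hx.1, hx.2⟩).continuousAt.continuousWithinAt)
    intro x hx
    rw [interior_Ico] at hx
    have hxβ : x ∈ Ioo (0:ℝ) β := ⟨hαs0.trans hx.1, hx.2⟩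
    rw [(gder x hxβ).deriv]
    apply div_pos
    · have h1 := hneg x hx
      have h2 : (0:ℝ) < x ^ (1-κ) := Real.rpow_pos_of_pos hxβ.1 _
      have := mul_neg_of_pos_of_neg (mul_pos hβ0 h2) h1
      linarith
    · have : (0:ℝ) < β - x := by linarith [hxβ.2]
      positivity
  refine ⟨gA, gM, ?_, ?_⟩
  · intro a ha hne
    rcases lt_or_gt_of_ne hne with hlt | hgt
    · exact gA ⟨ha.1, hlt.le⟩ ⟨hαs0, le_rfl⟩ hlt
    · exact gM ⟨le_rfl, hαsβ⟩ ⟨hgt.le, ha.2⟩ hgt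
  · have hA : (0:ℝ) < αs ^ κ := Real.rpow_pos_of_pos hαs0 κ
    have e1 := aux_id hκ hαs0
    have e2 : (0:ℝ) = β / αs - (∫ t in αs..(1:ℝ), t ^ (κ-2)) - 1 := hz ▸ hh αs
    have hbs : (0:ℝ) < β - αs := by linarith
    rw [hg]
    rw [div_eq_div_iff hbs.ne' hA.ne']
    have hJv : (∫ t in αs..(1:ℝ), t ^ (κ-2)) = β / αs - 1 := by linarith
    rw [hJv] at e1
    field_simp at e1
    linear_combination β * e1
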